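/- Let n > 0 and Y(z) = (√n/2)·tanh(√n·z/2 + φ₀), so Y' = -Y² + n/4. Then for any C₀ ∈ ℝ, the function y = C₀/2 - (69/2)n² + 420nY² - 840Y⁴ satisfies the fourth-order equation y'''' + y² - 13n·y'' - C₀y - 324n⁴ + C₀²/4 = 0 on ℝ. -/

import Mathlib

/-- Derivative of a degree-7 polynomial of `Y`, given the Riccati relation for `Y`. -/
lemma key_poly_deriv (a0 a1 a2 a3 a4 a5 a6 a7 : ℝ) {Y : ℝ → ℝ} {n : ℝ}
    (hY : ∀ z, HasDerivAt Y (n / 4 - (Y z) ^ 2) z) (z : ℝ) :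
    HasDerivAt (fun z => a0 + a1 * (Y z) ^ 1 + a2 * (Y z) ^ 2 + a3 * (Y z) ^ 3
        + a4 * (Y z) ^ 4 + a5 * (Y z) ^ 5 + a6 * (Y z) ^ 6 + a7 * (Y z) ^ 7)
      ((a1 + 2 * a2 * Y z + 3 * a3 * (Y z) ^ 2 + 4 * a4 * (Y z) ^ 3 + 5 * a5 * (Y z) ^ 4
        + 6 * a6 * (Y z) ^ 5 + 7 * a7 * (Y z) ^ 6) * (n / 4 - (Y z) ^ 2)) z := by
  have hp : HasDerivAt (fun t : ℝ => a0 + a1 * t ^ 1 + a2 * t ^ 2 + a3 * t ^ 3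
      + a4 * t ^ 4 + a5 * t ^ 5 + a6 * t ^ 6 + a7 * t ^ 7)
      (a1 * ((1 : ℕ) * (Y z) ^ (1 - 1)) + a2 * ((2 : ℕ) * (Y z) ^ (2 - 1))
        + a3 * ((3 : ℕ) * (Y z) ^ (3 - 1)) + a4 * ((4 : ℕ) * (Y z) ^ (4 - 1))
        + a5 * ((5 : ℕ) * (Y z) ^ (5 - 1)) + a6 * ((6 : ℕ) * (Y z) ^ (6 - 1))
        + a7 * ((7 : ℕ) * (Y z) ^ (7 - 1))) (Y z) := by
    have := (((((((hasDerivAt_const (Y z) a0).add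
      ((hasDerivAt_pow 1 (Y z)).const_mul a1)).add
      ((hasDerivAt_pow 2 (Y z)).const_mul a2)).add
      ((hasDerivAt_pow 3 (Y z)).const_mul a3)).add
      ((hasDerivAt_pow 4 (Y z)).const_mul a4)).add
      ((hasDerivAt_pow 5 (Y z)).const_mul a5)).add
      ((hasDerivAt_pow 6 (Y z)).const_mul a6)).add
      ((hasDerivAt_pow 7 (Y z)).const_mul a7)
    simp at this ⊢
    exact this
  have h := hp.comp z (hY z)
  refine h.congr_deriv ?_
  push_cast
  ring

/-- Exact solitary-wave solution of the fourth-order equation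
`y'''' + y² - 13n y'' - C₀y - 324n⁴ + C₀²/4 = 0`. -/
theorem fourth_order_exact_solution (n φ₀ C₀ : ℝ) (hn : 0 < n)
    (Y : ℝ → ℝ)
    (hYdef : Y = fun z => (Real.sqrt n / 2) * Real.tanh (Real.sqrt n * z / 2 + φ₀))
    (y : ℝ → ℝ)
    (hydef : y = fun z => C₀ / 2 - (69 / 2) * n ^ 2 + 420 * n * (Y z) ^ 2
      - 840 * (Y z) ^ 4) :
    (∀ z, deriv Y z = -(Y z) ^ 2 + n / 4) ∧
      ∀ z, deriv (deriv (deriv (deriv y))) z + (y z) ^ 2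
        - 13 * n * deriv (deriv y) z - C₀ * y z - 324 * n ^ 4 + C₀ ^ 2 / 4 = 0 := by
  have hsq : Real.sqrt n ^ 2 = n := Real.sq_sqrt hn.le
  -- the Riccati relation
  have hY : ∀ z, HasDerivAt Y (n / 4 - (Y z) ^ 2) z := by
    intro z
    set u : ℝ := Real.sqrt n * z / 2 + φ₀ with hu
    have hcu : Real.cosh u ≠ 0 := (Real.cosh_pos u).ne'
    have hud : HasDerivAt (fun z : ℝ => Real.sqrt n * z / 2 + φ₀) (Real.sqrt n / 2) z := by
      simpa using (((hasDerivAt_id z).const_mul (Real.sqrt n)).div_const 2).add_const φ₀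
    have htanh : HasDerivAt Real.tanh (1 / Real.cosh u ^ 2) u := by
      have h := (Real.hasDerivAt_sinh u).div (Real.hasDerivAt_cosh u) hcu
      have : HasDerivAt (fun x => Real.sinh x / Real.cosh x)
          ((Real.cosh u * Real.cosh u - Real.sinh u * Real.sinh u) / Real.cosh u ^ 2) u := h
      have heq : (Real.cosh u * Real.cosh u - Real.sinh u * Real.sinh u) / Real.cosh u ^ 2
          = 1 / Real.cosh u ^ 2 := by
        have := Real.cosh_sq_sub_sinh_sq u
        rw [show Real.cosh u * Real.cosh u - Real.sinh u * Real.sinh u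
          = Real.cosh u ^ 2 - Real.sinh u ^ 2 by ring, this]
      rw [heq] at this
      have hfun : Real.tanh = fun x => Real.sinh x / Real.cosh x := by
        funext x; exact Real.tanh_eq_sinh_div_cosh x
      rw [hfun]
      exact this
    have hcomp := (htanh.comp z hud).const_mul (Real.sqrt n / 2)
    rw [hYdef]
    refine hcomp.congr_deriv ?_
    have htanhsq : 1 - Real.tanh u ^ 2 = 1 / Real.cosh u ^ 2 := by
      rw [Real.tanh_eq_sinh_div_cosh]
      field_simp
      exact Real.cosh_sq_sub_sinh_sq u
    have : n / 4 - (Real.sqrt n / 2 * Real.tanh u) ^ 2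
        = n / 4 * (1 - Real.tanh u ^ 2) := by
      have : (Real.sqrt n / 2 * Real.tanh u) ^ 2 = n / 4 * Real.tanh u ^ 2 := by
        rw [mul_pow, div_pow, hsq]; ring
      rw [this]; ring
    rw [this, htanhsq]
    have h2 : Real.sqrt n / 2 * (1 / Real.cosh u ^ 2 * (Real.sqrt n / 2))
        = Real.sqrt n ^ 2 / 4 * (1 / Real.cosh u ^ 2) := by ring
    rw [h2, hsq]
  constructor
  · intro z
    rw [(hY z).deriv]; ring
  -- now the chain of derivatives
  have hyEq : y = fun z => (C₀ / 2 - (69 / 2) * n ^ 2) + 0 * (Y z) ^ 1 + (420 * n) * (Y z) ^ 2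
      + 0 * (Y z) ^ 3 + (-840) * (Y z) ^ 4 + 0 * (Y z) ^ 5 + 0 * (Y z) ^ 6 + 0 * (Y z) ^ 7 := by
    rw [hydef]; funext z; ring
  have h1 : ∀ z, HasDerivAt y (0 + (210 * n ^ 2) * (Y z) ^ 1 + 0 * (Y z) ^ 2
      + (-1680 * n) * (Y z) ^ 3 + 0 * (Y z) ^ 4 + 3360 * (Y z) ^ 5
      + 0 * (Y z) ^ 6 + 0 * (Y z) ^ 7) z := by
    intro z
    rw [hyEq]
    convert key_poly_deriv (C₀ / 2 - (69 / 2) * n ^ 2) 0 (420 * n) 0 (-840) 0 0 0 hY z using 1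
    ring
  have hd1 : deriv y = fun z => 0 + (210 * n ^ 2) * (Y z) ^ 1 + 0 * (Y z) ^ 2
      + (-1680 * n) * (Y z) ^ 3 + 0 * (Y z) ^ 4 + 3360 * (Y z) ^ 5
      + 0 * (Y z) ^ 6 + 0 * (Y z) ^ 7 := funext fun z => (h1 z).deriv
  have h2 : ∀ z, HasDerivAt (deriv y) ((105 / 2 * n ^ 3) + 0 * (Y z) ^ 1
      + (-1470 * n ^ 2) * (Y z) ^ 2 + 0 * (Y z) ^ 3 + (9240 * n) * (Y z) ^ 4
      + 0 * (Y z) ^ 5 + (-16800) * (Y z) ^ 6 + 0 * (Y z) ^ 7) z := by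
    intro z
    rw [hd1]
    convert key_poly_deriv 0 (210 * n ^ 2) 0 (-1680 * n) 0 3360 0 0 hY z using 1
    ring
  have hd2 : deriv (deriv y) = fun z => (105 / 2 * n ^ 3) + 0 * (Y z) ^ 1
      + (-1470 * n ^ 2) * (Y z) ^ 2 + 0 * (Y z) ^ 3 + (9240 * n) * (Y z) ^ 4
      + 0 * (Y z) ^ 5 + (-16800) * (Y z) ^ 6 + 0 * (Y z) ^ 7 := funext fun z => (h2 z).deriv
  have h3 : ∀ z, HasDerivAt (deriv (deriv y)) (0 + (-735 * n ^ 3) * (Y z) ^ 1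
      + 0 * (Y z) ^ 2 + (12180 * n ^ 2) * (Y z) ^ 3 + 0 * (Y z) ^ 4
      + (-62160 * n) * (Y z) ^ 5 + 0 * (Y z) ^ 6 + 100800 * (Y z) ^ 7) z := by
    intro z
    rw [hd2]
    convert key_poly_deriv (105 / 2 * n ^ 3) 0 (-1470 * n ^ 2) 0 (9240 * n) 0 (-16800) 0 hY z
      using 1
    ring
  have hd3 : deriv (deriv (deriv y)) = fun z => 0 + (-735 * n ^ 3) * (Y z) ^ 1
      + 0 * (Y z) ^ 2 + (12180 * n ^ 2) * (Y z) ^ 3 + 0 * (Y z) ^ 4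
      + (-62160 * n) * (Y z) ^ 5 + 0 * (Y z) ^ 6 + 100800 * (Y z) ^ 7 :=
    funext fun z => (h3 z).deriv
  have h4 : ∀ z, HasDerivAt (deriv (deriv (deriv y)))
      ((-735 * n ^ 3 + 2 * 0 * Y z + 3 * (12180 * n ^ 2) * (Y z) ^ 2 + 4 * 0 * (Y z) ^ 3
        + 5 * (-62160 * n) * (Y z) ^ 4 + 6 * 0 * (Y z) ^ 5 + 7 * 100800 * (Y z) ^ 6)
        * (n / 4 - (Y z) ^ 2)) z := by
    intro z
    rw [hd3]
    exact key_poly_deriv 0 (-735 * n ^ 3) 0 (12180 * n ^ 2) 0 (-62160 * n) 0 100800 hY z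
  intro z
  have e4 := (h4 z).deriv
  have e2 : deriv (deriv y) z = (105 / 2 * n ^ 3) + 0 * (Y z) ^ 1
      + (-1470 * n ^ 2) * (Y z) ^ 2 + 0 * (Y z) ^ 3 + (9240 * n) * (Y z) ^ 4
      + 0 * (Y z) ^ 5 + (-16800) * (Y z) ^ 6 + 0 * (Y z) ^ 7 := by rw [hd2]
  have e0 : y z = C₀ / 2 - (69 / 2) * n ^ 2 + 420 * n * (Y z) ^ 2 - 840 * (Y z) ^ 4 := by
    rw [hydef]
  rw [e4, e2, e0]
  ring
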